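/- Let G be a finite nonabelian group which contains a normal abelian subgroup A with C_G(A) = A. Let m be the smallest conjugacy class size of G greater than 1, and let M(G) be the subgroup of G generated by all elements whose index is 1 or m. Then M(G) is nilpotent of nilpotency class at most 3. -/

import Mathlib

open Subgroup
open scoped commutatorElement

private lemma card_subgroupOf' {G : Type*} [Group G] (H K : Subgroup G) :
    Nat.card (H.subgroupOf K) = Nat.card ↥(H ⊓ K) := by
  rw [← inf_subgroupOf_right]
  exact Nat.card_congr (subgroupOfEquivOfLe inf_le_right).toEquiv

/-- Key lemma: if `x` has minimal index `m`, then `⁅x, a⁆` is central for every `a ∈ A`,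
where `A` is a normal abelian subgroup. -/
private lemma isaacs_key {G : Type*} [Group G] [Finite G]
    (A : Subgroup G) (hA : A.Normal) (hAab : IsMulCommutative A)
    {m : ℕ}
    (hm : IsLeast {k : ℕ | 1 < k ∧ ∃ x : G, (Subgroup.centralizer {x}).index = k} m)
    {x : G} (hx : (Subgroup.centralizer {x}).index = m)
    {a : G} (ha : a ∈ A) : ⁅x, a⁆ ∈ Subgroup.center G := by
  haveI := hAab
  classical
  have hmemA : ∀ u : G, u ∈ A → ⁅x, u⁆ ∈ A := by
    intro u hu
    have h1 : x * u * x⁻¹ ∈ A := hA.conj_mem u hu x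
    have h2 : (x * u * x⁻¹) * u⁻¹ ∈ A := A.mul_mem h1 (A.inv_mem hu)
    simpa [commutatorElement_def, mul_assoc] using h2
  by_cases hb1 : ⁅x, a⁆ = 1
  · rw [hb1]; exact (Subgroup.center G).one_mem
  set C : Subgroup G := Subgroup.centralizer {x} with hCdef
  -- the homomorphism `A → G`, `u ↦ ⁅x, u⁆`
  have hmul : ∀ u v : ↥A, ⁅x, ((u * v : ↥A) : G)⁆ = ⁅x, (u : G)⁆ * ⁅x, (v : G)⁆ := by
    intro u v
    have h1 : ⁅x, (u : G) * (v : G)⁆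
        = ⁅x, (u : G)⁆ * ((u : G) * ⁅x, (v : G)⁆ * (u : G)⁻¹) := by
      simp only [commutatorElement_def]; group
    have h2 : (u : G) * ⁅x, (v : G)⁆ = ⁅x, (v : G)⁆ * (u : G) :=
      mul_comm_of_mem_isMulCommutative A u.2 (hmemA _ v.2)
    push_cast
    rw [h1, h2]
    group
  let φ : ↥A →* G := MonoidHom.mk' (fun u : ↥A => ⁅x, (u : G)⁆) hmul
  set B : Subgroup G := φ.range with hBdef
  set b : G := ⁅x, a⁆ with hbdef
  have hbB : b ∈ B := ⟨⟨a, ha⟩, rfl⟩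
  set Cb : Subgroup G := Subgroup.centralizer {b} with hCbdef
  set C' : Subgroup G := C ⊓ Cb with hC'def
  set D : Subgroup G := A ⊓ C with hDdef
  set J : Subgroup G := A ⊔ C' with hJdef
  have hbA : b ∈ A := hmemA a ha
  have hACb : A ≤ Cb := by
    intro g hg
    exact mem_centralizer_singleton_iff.mpr (mul_comm_of_mem_isMulCommutative A hg hbA)
  have hinfC' : A ⊓ C' = D := by
    rw [hC'def, ← inf_assoc]
    exact inf_eq_left.mpr (le_trans inf_le_left hACb)
  -- first isomorphism theorem: |A| = |B| * |D|
  have cardA : Nat.card ↥A = Nat.card ↥B * Nat.card ↥D := by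
    have e1 : Nat.card ↥A = Nat.card (↥A ⧸ φ.ker) * Nat.card φ.ker :=
      Subgroup.card_eq_card_quotient_mul_card_subgroup φ.ker
    have e2 : Nat.card (↥A ⧸ φ.ker) = Nat.card ↥B :=
      Nat.card_congr (QuotientGroup.quotientKerEquivRange φ).toEquiv
    have e3 : Nat.card φ.ker = Nat.card ↥D := by
      apply Nat.card_congr
      refine ⟨fun p => ⟨(p.1 : G), p.1.2, ?_⟩, fun q => ⟨⟨(q : G), q.2.1⟩, ?_⟩, ?_, ?_⟩
      · have hk : ⁅x, (p.1 : G)⁆ = 1 := p.2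
        exact mem_centralizer_singleton_iff.mpr
          (commutatorElement_eq_one_iff_mul_comm.mp hk).symm
      · have hq2 : (q : G) ∈ C := q.2.2
        have hk : (q : G) * x = x * (q : G) := mem_centralizer_singleton_iff.mp hq2
        exact (show φ ⟨(q : G), q.2.1⟩ = 1 from
          commutatorElement_eq_one_iff_mul_comm.mpr hk.symm)
      · intro p; rfl
      · intro q; rfl
    rw [e1, e2, e3]
  set q : ℕ := A.relIndex C' with hqdef
  set r : ℕ := C'.relIndex C with hrdef
  have hJcard : Nat.card ↥J = q * Nat.card ↥A := by
    have e1 : (A.subgroupOf J).index * Nat.card (A.subgroupOf J) = Nat.card ↥J :=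
      Subgroup.index_mul_card (A.subgroupOf J)
    have e2 : (A.subgroupOf J).index = q := by
      show A.relIndex J = q
      rw [hJdef, Subgroup.relIndex_sup_left]
    have e3 : Nat.card (A.subgroupOf J) = Nat.card ↥A := by
      rw [card_subgroupOf', inf_eq_left.mpr (le_sup_left : A ≤ J)]
    rw [← e1, e2, e3]
  have hC'card : Nat.card ↥C' = q * Nat.card ↥D := by
    have e1 : (A.subgroupOf C').index * Nat.card (A.subgroupOf C') = Nat.card ↥C' :=
      Subgroup.index_mul_card (A.subgroupOf C')
    have e3 : Nat.card (A.subgroupOf C') = Nat.card ↥D := by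
      rw [card_subgroupOf', hinfC']
    rw [← e1, e3]
    rfl
  have hCcard : Nat.card ↥C = r * Nat.card ↥C' := by
    have e1 : (C'.subgroupOf C).index * Nat.card (C'.subgroupOf C) = Nat.card ↥C :=
      Subgroup.index_mul_card (C'.subgroupOf C)
    have e3 : Nat.card (C'.subgroupOf C) = Nat.card ↥C' := by
      rw [card_subgroupOf', inf_eq_left.mpr (inf_le_left : C' ≤ C)]
    rw [← e1, e3]
    rfl
  -- orbit bound : r < |B|
  have hrB : r < Nat.card ↥B := by
    -- injection from C ⧸ C'.subgroupOf C into B \ {1}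
    have hF0 : ∀ c : ↥C, (c : G) * b * (c : G)⁻¹ ∈ B ∧ (c : G) * b * (c : G)⁻¹ ≠ 1 := by
      intro c
      constructor
      · obtain ⟨u, hu⟩ := hbB
        have hxc : x * (c : G) = (c : G) * x := (mem_centralizer_singleton_iff.mp c.2).symm
        have hcx : (c : G) * x * (c : G)⁻¹ = x := by
          rw [← hxc]; group
        refine ⟨⟨(c : G) * (u : G) * (c : G)⁻¹, hA.conj_mem _ u.2 _⟩, ?_⟩
        show ⁅x, (c : G) * (u : G) * (c : G)⁻¹⁆ = (c : G) * b * (c : G)⁻¹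
        rw [← hu]
        show ⁅x, (c : G) * (u : G) * (c : G)⁻¹⁆ = (c : G) * ⁅x, (u : G)⁆ * (c : G)⁻¹
        rw [conjugate_commutatorElement, hcx]
      · intro h
        apply hb1
        have : b = (c : G)⁻¹ * ((c : G) * b * (c : G)⁻¹) * (c : G) := by group
        rw [h] at this
        simpa using this
    let T := {y : G // y ∈ B ∧ y ≠ 1}
    have hcardT : Nat.card T = Nat.card ↥B - 1 := by
      letI := Fintype.ofFinite ↥B
      letI : Fintype T := Fintype.ofFinite T
      have eT : Nat.card T = Fintype.card {y : ↥B // ¬ (y = 1)} := by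
        rw [Nat.card_eq_fintype_card]
        apply Fintype.card_congr
        refine ⟨fun p => ⟨⟨p.1, p.2.1⟩, ?_⟩, fun p => ⟨(p.1 : G), p.1.2, ?_⟩, ?_, ?_⟩
        · intro hcon
          exact p.2.2 (by simpa using congrArg (Subtype.val) hcon)
        · intro hcon
          exact p.2 (by ext; simpa using hcon)
        · intro p; rfl
        · intro p; rfl
      rw [eT, Fintype.card_subtype_compl, Fintype.card_subtype_eq,
        Nat.card_eq_fintype_card]
    have hinj : ∃ F : (↥C ⧸ C'.subgroupOf C) → T, Function.Injective F := by
      refine ⟨fun z => Quotient.liftOn' z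
        (fun c => (⟨(c : G) * b * (c : G)⁻¹, hF0 c⟩ : T)) ?_, ?_⟩
      · intro c₁ c₂ hrel
        have hs : (c₁⁻¹ * c₂ : ↥C) ∈ C'.subgroupOf C :=
          (QuotientGroup.leftRel_apply).mp hrel
        have hsCb : ((c₁⁻¹ * c₂ : ↥C) : G) ∈ Cb := (mem_subgroupOf.mp hs).2
        have hsb : b * ((c₁⁻¹ * c₂ : ↥C) : G) = ((c₁⁻¹ * c₂ : ↥C) : G) * b :=
          (mem_centralizer_singleton_iff.mp hsCb).symm
        apply Subtype.ext
        show (c₁ : G) * b * (c₁ : G)⁻¹ = (c₂ : G) * b * (c₂ : G)⁻¹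
        have hc2 : (c₂ : G) = (c₁ : G) * ((c₁⁻¹ * c₂ : ↥C) : G) := by
          push_cast; group
        rw [hc2]
        set s : G := ((c₁⁻¹ * c₂ : ↥C) : G)
        calc (c₁ : G) * b * (c₁ : G)⁻¹
            = (c₁ : G) * (b * s) * s⁻¹ * (c₁ : G)⁻¹ := by group
          _ = (c₁ : G) * (s * b) * s⁻¹ * (c₁ : G)⁻¹ := by rw [hsb]
          _ = (c₁ : G) * s * b * ((c₁ : G) * s)⁻¹ := by group
      · intro z₁ z₂ hz
        induction z₁ using Quotient.inductionOn' with
        | h c₁ =>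
        induction z₂ using Quotient.inductionOn' with
        | h c₂ =>
        have heq : (c₁ : G) * b * (c₁ : G)⁻¹ = (c₂ : G) * b * (c₂ : G)⁻¹ :=
          congrArg Subtype.val hz
        apply Quotient.sound'
        rw [QuotientGroup.leftRel_apply]
        refine mem_subgroupOf.mpr ⟨(c₁⁻¹ * c₂ : ↥C).2, ?_⟩
        apply mem_centralizer_singleton_iff.mpr
        push_cast
        have : b * ((c₁ : G)⁻¹ * (c₂ : G)) = ((c₁ : G)⁻¹ * (c₂ : G)) * b := by
          have h2 : b * (c₁ : G)⁻¹ * (c₂ : G) = (c₁ : G)⁻¹ * (c₂ : G) * b := by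
            have h3 : (c₁ : G)⁻¹ * ((c₁ : G) * b * (c₁ : G)⁻¹) * (c₂ : G)
                = (c₁ : G)⁻¹ * ((c₂ : G) * b * (c₂ : G)⁻¹) * (c₂ : G) := by rw [heq]
            calc b * (c₁ : G)⁻¹ * (c₂ : G)
                = (c₁ : G)⁻¹ * ((c₁ : G) * b * (c₁ : G)⁻¹) * (c₂ : G) := by group
              _ = (c₁ : G)⁻¹ * ((c₂ : G) * b * (c₂ : G)⁻¹) * (c₂ : G) := h3
              _ = (c₁ : G)⁻¹ * (c₂ : G) * b := by group
          calc b * ((c₁ : G)⁻¹ * (c₂ : G)) = b * (c₁ : G)⁻¹ * (c₂ : G) := by group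
            _ = (c₁ : G)⁻¹ * (c₂ : G) * b := h2
            _ = ((c₁ : G)⁻¹ * (c₂ : G)) * b := by group
        exact this.symm
    obtain ⟨F, hFinj⟩ := hinj
    have hle : r ≤ Nat.card T := by
      have : r = Nat.card (↥C ⧸ C'.subgroupOf C) := rfl
      rw [this]
      exact Nat.card_le_card_of_injective F hFinj
    have hBpos : 0 < Nat.card ↥B := Nat.card_pos
    omega
  -- assemble the arithmetic
  have hJle : J ≤ Cb := sup_le hACb inf_le_right
  have hDpos : 0 < Nat.card ↥D := Nat.card_pos
  have hC'pos : 0 < Nat.card ↥C' := Nat.card_pos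
  have hqpos : 0 < q := by
    rcases Nat.eq_zero_or_pos q with h | h
    · rw [h, zero_mul] at hC'card; omega
    · exact h
  have cardG1 : J.index * Nat.card ↥J = Nat.card G := Subgroup.index_mul_card J
  have cardG2 : m * Nat.card ↥C = Nat.card G := by
    rw [← hx]; exact Subgroup.index_mul_card C
  have key : (J.index * Nat.card ↥B) * (q * Nat.card ↥D)
      = (m * r) * (q * Nat.card ↥D) := by
    calc (J.index * Nat.card ↥B) * (q * Nat.card ↥D)
        = J.index * (q * (Nat.card ↥B * Nat.card ↥D)) := by ring
      _ = J.index * Nat.card ↥J := by rw [← cardA, ← hJcard]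
      _ = Nat.card G := cardG1
      _ = m * Nat.card ↥C := cardG2.symm
      _ = m * (r * Nat.card ↥C') := by rw [← hCcard]
      _ = m * (r * (q * Nat.card ↥D)) := by rw [← hC'card]
      _ = (m * r) * (q * Nat.card ↥D) := by ring
  have hKey : J.index * Nat.card ↥B = m * r :=
    Nat.eq_of_mul_eq_mul_right (Nat.mul_pos hqpos hDpos) key
  have hmpos : 0 < m := by
    rw [← hx]
    exact Nat.pos_of_ne_zero Subgroup.index_ne_zero_of_finite
  have hJlt : J.index < m := by
    have h1 : m * r < m * Nat.card ↥B := (Nat.mul_lt_mul_left hmpos).mpr hrB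
    rw [← hKey] at h1
    exact Nat.lt_of_mul_lt_mul_right h1
  have hCbJ : Cb.index ≤ J.index := by
    have hdvd : Cb.index ∣ J.index := Subgroup.index_dvd_of_le hJle
    exact Nat.le_of_dvd (Nat.pos_of_ne_zero Subgroup.index_ne_zero_of_finite) hdvd
  have hCblt : Cb.index < m := lt_of_le_of_lt hCbJ hJlt
  have hCb1 : Cb.index = 1 := by
    by_contra hne
    have h1 : 1 < Cb.index :=
      lt_of_le_of_ne (Nat.pos_of_ne_zero Subgroup.index_ne_zero_of_finite) (Ne.symm hne)
    have := hm.2 ⟨h1, b, rfl⟩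
    omega
  have hCbtop : Cb = ⊤ := Subgroup.index_eq_one.mp hCb1
  apply Subgroup.mem_center_iff.mpr
  intro g
  have hg : g ∈ Cb := by rw [hCbtop]; trivial
  exact mem_centralizer_singleton_iff.mp hg

/-- (Isaacs) Let `G` be a finite nonabelian group containing a normal abelian subgroup `A`
with `C_G(A) = A`. Let `m` be the smallest conjugacy class size of `G` exceeding `1`, and
let `M(G)` be the subgroup generated by all elements of index `1` or `m`. Then `M(G)` is
nilpotent of class at most `3`. -/
theorem isaacs_M_nilpotent_class_le_three
    {G : Type*} [Group G] [Finite G] (hG : ∃ x y : G, x * y ≠ y * x)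
    (A : Subgroup G) (hA : A.Normal) (hAab : IsMulCommutative A)
    (hC : Subgroup.centralizer (A : Set G) = A)
    (m : ℕ)
    (hm : IsLeast {k : ℕ | 1 < k ∧ ∃ x : G, (Subgroup.centralizer {x}).index = k} m)
    (M : Subgroup G)
    (hM : M = Subgroup.closure {x : G | (Subgroup.centralizer {x}).index = 1 ∨
      (Subgroup.centralizer {x}).index = m}) :
    _root_.lowerCentralSeries M 3 = ⊥ := by
  haveI := hAab
  -- Step 1: every element of `M` has central commutators with `A`
  have hgen : ∀ g ∈ M, ∀ u ∈ A, ⁅g, u⁆ ∈ Subgroup.center G := by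
    intro g hg
    rw [hM] at hg
    induction hg using Subgroup.closure_induction with
    | mem y hy =>
      intro u hu
      rcases hy with h1 | h2
      · -- index 1 : y is central
        have htop : Subgroup.centralizer {y} = ⊤ := Subgroup.index_eq_one.mp h1
        have hyc : y * u = u * y := by
          have : u ∈ Subgroup.centralizer {y} := by rw [htop]; trivial
          exact (mem_centralizer_singleton_iff.mp this).symm
        rw [commutatorElement_eq_one_iff_mul_comm.mpr hyc]
        exact (Subgroup.center G).one_mem
      · exact isaacs_key A hA hAab hm h2 hu
    | one =>
      intro u hu
      have : ⁅(1 : G), u⁆ = 1 := by simp [commutatorElement_def]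
      rw [this]; exact (Subgroup.center G).one_mem
    | mul y z hy hz ihy ihz =>
      intro u hu
      have h1 := ihz u hu
      have h2 := ihy u hu
      have hident : ⁅y * z, u⁆ = (y * ⁅z, u⁆ * y⁻¹) * ⁅y, u⁆ := by
        simp only [commutatorElement_def]; group
      have hconj : y * ⁅z, u⁆ * y⁻¹ = ⁅z, u⁆ := by
        rw [Subgroup.mem_center_iff.mp h1 y]; group
      rw [hident, hconj]
      exact mul_mem h1 h2
    | inv y hy ihy =>
      intro u hu
      have h2 := ihy u hu
      have hident : ⁅y⁻¹, u⁆ = y⁻¹ * ⁅y, u⁆⁻¹ * y := by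
        simp only [commutatorElement_def]; group
      have hconj : y⁻¹ * ⁅y, u⁆⁻¹ * y = ⁅y, u⁆⁻¹ := by
        have := Subgroup.mem_center_iff.mp (inv_mem h2) y⁻¹
        rw [this]; group
      rw [hident, hconj]
      exact inv_mem h2
  -- Step 2: commutators of elements of `M` lie in `A`
  have hMA : ∀ g ∈ M, ∀ h ∈ M, ⁅g, h⁆ ∈ A := by
    intro g hg h hh
    rw [← hC]
    apply Subgroup.mem_centralizer_iff.mpr
    intro y hy
    have hy' : y ∈ A := hy
    -- conjugation of an element of A by g*h and by h*g agree
    have hswap : ∀ u ∈ A, (g * h) * u * (g * h)⁻¹ = (h * g) * u * (h * g)⁻¹ := by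
      intro u hu
      have zg := hgen g hg u hu
      have zh := hgen h hh u hu
      have e1 : g * u * g⁻¹ = ⁅g, u⁆ * u := by simp only [commutatorElement_def]; group
      have e2 : h * u * h⁻¹ = ⁅h, u⁆ * u := by simp only [commutatorElement_def]; group
      have cgh : (g * h) * u * (g * h)⁻¹ = ⁅h, u⁆ * (⁅g, u⁆ * u) := by
        have step : (g * h) * u * (g * h)⁻¹ = g * (h * u * h⁻¹) * g⁻¹ := by group
        rw [step, e2]
        have : g * (⁅h, u⁆ * u) * g⁻¹ = (g * ⁅h, u⁆ * g⁻¹) * (g * u * g⁻¹) := by group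
        rw [this, e1]
        have hc : g * ⁅h, u⁆ * g⁻¹ = ⁅h, u⁆ := by
          rw [Subgroup.mem_center_iff.mp zh g]; group
        rw [hc]
      have chg : (h * g) * u * (h * g)⁻¹ = ⁅g, u⁆ * (⁅h, u⁆ * u) := by
        have step : (h * g) * u * (h * g)⁻¹ = h * (g * u * g⁻¹) * h⁻¹ := by group
        rw [step, e1]
        have : h * (⁅g, u⁆ * u) * h⁻¹ = (h * ⁅g, u⁆ * h⁻¹) * (h * u * h⁻¹) := by group
        rw [this, e2]
        have hc : h * ⁅g, u⁆ * h⁻¹ = ⁅g, u⁆ := by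
          rw [Subgroup.mem_center_iff.mp zg h]; group
        rw [hc]
      rw [cgh, chg]
      have : ⁅h, u⁆ * ⁅g, u⁆ = ⁅g, u⁆ * ⁅h, u⁆ := Subgroup.mem_center_iff.mp zg ⁅h, u⁆
      rw [← mul_assoc, ← mul_assoc, this]
    -- now deduce that ⁅g,h⁆ commutes with y
    have ha' : (h * g)⁻¹ * y * (h * g) ∈ A := by
      have := hA.conj_mem y hy' (h * g)⁻¹
      simpa using this
    have hkey : ⁅g, h⁆ * y * ⁅g, h⁆⁻¹ = y := by
      have hc : ⁅g, h⁆ * y * ⁅g, h⁆⁻¹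
          = (g * h) * ((h * g)⁻¹ * y * (h * g)) * (g * h)⁻¹ := by
        simp only [commutatorElement_def]; group
      rw [hc, hswap _ ha']
      group
    calc y * ⁅g, h⁆ = (⁅g, h⁆ * y * ⁅g, h⁆⁻¹) * ⁅g, h⁆ := by rw [hkey]
      _ = ⁅g, h⁆ * y := by group
  -- Step 3: climb the lower central series
  have l1 : Subgroup.lowerCentralSeries M 1 ≤ A := by
    rw [Subgroup.lowerCentralSeries_succ, Subgroup.lowerCentralSeries_zero, Subgroup.commutator_le]
    intro p hp q hq
    exact hMA p hp q hq
  have l2 : Subgroup.lowerCentralSeries M 2 ≤ Subgroup.center G := by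
    rw [Subgroup.lowerCentralSeries_succ, Subgroup.commutator_le]
    intro p hp q hq
    have hcen : ⁅q, p⁆ ∈ Subgroup.center G := hgen q hq p (l1 hp)
    rw [← commutatorElement_inv]
    exact inv_mem hcen
  rw [eq_bot_iff]
  show Subgroup.lowerCentralSeries M 3 ≤ ⊥
  rw [Subgroup.lowerCentralSeries_succ, Subgroup.commutator_le]
  intro p hp q hq
  have := Subgroup.mem_center_iff.mp (l2 hp) q
  rw [Subgroup.mem_bot, commutatorElement_eq_one_iff_mul_comm]
  exact this.symm
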